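/- Let n ≥ 1 and k ≥ 0 with k ≤ n, let w₀, …, w_k be k+1 affinely independent points of the Euclidean space ℝⁿ, and let Γ = convexHull{w₀, …, w_k} be the k-simplex they span. Then for every affine map u : ℝⁿ → ℝ, the integral of u over Γ with respect to the k-dimensional Hausdorff measure equals the measure of Γ times the arithmetic mean of the vertex values: ∫_Γ u dμH[k] = μH[k](Γ) · (1/(k+1)) · ∑_{i=0}^{k} u(wᵢ). In particular, the integral over a cell face of the arithmetic mean of the nodal (vertex) values of a piecewise-linear function equals the integral of the function itself over that face (Lemma 1 of the paper). -/

import Mathlib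

open MeasureTheory Set Module

noncomputable def sumF (m : ℕ) : EuclideanSpace ℝ (Fin m) →ₗ[ℝ] ℝ where
  toFun x := ∑ i, x i
  map_add' x y := by simp [Finset.sum_add_distrib]
  map_smul' c x := by simp [Finset.mul_sum]

noncomputable def subIso {m : ℕ} {F : Type*} [NormedAddCommGroup F] [InnerProductSpace ℝ F]
    (V : Submodule ℝ F) [FiniteDimensional ℝ V] (h : finrank ℝ V = m) :
    EuclideanSpace ℝ (Fin m) ≃ₗᵢ[ℝ] V :=
  ((stdOrthonormalBasis ℝ V).reindex (finCongr h)).repr.symm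

theorem isometry_addSub {m : ℕ} {F : Type*} [NormedAddCommGroup F] [InnerProductSpace ℝ F]
    (V : Submodule ℝ F) [FiniteDimensional ℝ V] (h : finrank ℝ V = m) (p : F) :
    Isometry (fun x : EuclideanSpace ℝ (Fin m) => p + ((subIso V h x : F))) := by
  apply Isometry.of_dist_eq
  intro x y
  rw [dist_add_left]
  rw [← Subtype.dist_eq, (subIso V h).isometry.dist_eq]

theorem range_addSub {m : ℕ} {F : Type*} [NormedAddCommGroup F] [InnerProductSpace ℝ F]
    (V : Submodule ℝ F) [FiniteDimensional ℝ V] (h : finrank ℝ V = m) (p : F) :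
    range (fun x : EuclideanSpace ℝ (Fin m) => p + ((subIso V h x : F))) = {y | y - p ∈ V} := by
  ext y
  constructor
  · rintro ⟨x, rfl⟩; simp
  · intro hy
    exact ⟨(subIso V h).symm ⟨y - p, hy⟩, by simp⟩

theorem isometry_map_restrict {X Y : Type*} [EMetricSpace X] [EMetricSpace Y]
    [MeasurableSpace X] [BorelSpace X] [MeasurableSpace Y] [BorelSpace Y]
    {f : X → Y} (hf : Isometry f) {d : ℝ} (hd : 0 ≤ d) (s : Set X) :
    Measure.map f (μH[d].restrict s) = μH[d].restrict (f '' s) := by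
  ext t ht
  rw [Measure.map_apply hf.continuous.measurable ht, Measure.restrict_apply ht,
    Measure.restrict_apply (hf.continuous.measurable ht)]
  have h : t ∩ f '' s = f '' (f ⁻¹' t ∩ s) := by
    ext y; constructor
    · rintro ⟨hyt, x, hxs, rfl⟩; exact ⟨x, ⟨hyt, hxs⟩, rfl⟩
    · rintro ⟨x, ⟨hxt, hxs⟩, rfl⟩; exact ⟨hxt, ⟨x, hxs, rfl⟩⟩
  rw [h, hf.hausdorffMeasure_image (Or.inl hd)]

theorem setIntegral_image_isometry {X Y : Type*} [EMetricSpace X] [EMetricSpace Y]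
    [MeasurableSpace X] [BorelSpace X] [MeasurableSpace Y] [BorelSpace Y]
    {f : X → Y} (hf : Isometry f) {d : ℝ} (hd : 0 ≤ d) (s : Set X) {u : Y → ℝ}
    (hu : Continuous u) :
    ∫ y in f '' s, u y ∂μH[d] = ∫ x in s, u (f x) ∂μH[d] := by
  rw [← isometry_map_restrict hf hd s,
    integral_map hf.continuous.measurable.aemeasurable hu.aestronglyMeasurable]

theorem integrableOn_image_isometry {X Y : Type*} [EMetricSpace X] [EMetricSpace Y]
    [MeasurableSpace X] [BorelSpace X] [MeasurableSpace Y] [BorelSpace Y]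
    {f : X → Y} (hf : Isometry f) {d : ℝ} (hd : 0 ≤ d) (s : Set X) {u : Y → ℝ}
    (hu : Continuous u) :
    IntegrableOn u (f '' s) μH[d] ↔ IntegrableOn (fun x => u (f x)) s μH[d] := by
  rw [IntegrableOn, IntegrableOn, ← isometry_map_restrict hf hd s,
    integrable_map_measure hu.aestronglyMeasurable hf.continuous.measurable.aemeasurable]
  rfl

-- Haar instance on EuclideanSpace ℝ (Fin k) for μH[(k:ℝ)]
theorem isAddHaar_hausdorff_euclidean (k : ℕ) :
    (μH[(k:ℝ)] : Measure (EuclideanSpace ℝ (Fin k))).IsAddHaarMeasure := by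
  have h : ((k:ℝ)) = ((finrank ℝ (EuclideanSpace ℝ (Fin k)) : ℕ) : ℝ) := by
    simp [finrank_euclideanSpace_fin]
  rw [h]
  infer_instance

section Key
variable (k : ℕ)

local notation "E1" => EuclideanSpace ℝ (Fin (k+1))
local notation "Ek" => EuclideanSpace ℝ (Fin k)

noncomputable def bvec : Fin (k+1) → EuclideanSpace ℝ (Fin (k+1)) :=
  fun i => EuclideanSpace.single i (1:ℝ)

theorem sum_eq_one_on_simplex {x : E1} (hx : x ∈ convexHull ℝ (range (bvec k))) :
    ∑ i, x i = 1 := by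
  have h1 : range (bvec k) ⊆ {y : E1 | ∑ i, y i = 1} := by
    rintro _ ⟨j, rfl⟩
    simp [bvec, EuclideanSpace.single_apply]
  have h2 : Convex ℝ {y : E1 | ∑ i, y i = 1} := by
    intro a ha b hb s t hs ht hst
    simp only [mem_setOf_eq] at *
    have : ∑ i, (s • a + t • b) i = s * ∑ i, a i + t * ∑ i, b i := by
      simp [Finset.sum_add_distrib, Finset.mul_sum]
    rw [this, ha, hb]; linarith
  exact convexHull_min h1 h2 hx

theorem simplex_compact : IsCompact (convexHull ℝ (range (bvec k))) :=
  (finite_range _).isCompact_convexHull ℝ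


theorem key_simplex (c : Fin (k+1) → ℝ) :
    ∫ x in convexHull ℝ (range (bvec k)), (∑ i, c i * x i) ∂μH[(k:ℝ)] =
      (μH[(k:ℝ)] (convexHull ℝ (range (bvec k)))).toReal * ((1/(k+1:ℝ)) * ∑ i, c i) := by
  haveI := isAddHaar_hausdorff_euclidean k
  have hd0 : (0:ℝ) ≤ (k:ℝ) := Nat.cast_nonneg k
  set Δ : Set (EuclideanSpace ℝ (Fin (k+1))) := convexHull ℝ (range (bvec k)) with hΔdef
  have hΔmeas : MeasurableSet Δ := (simplex_compact k).isClosed.measurableSet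
  -- the hyperplane parametrization
  have hdim : finrank ℝ (LinearMap.ker (sumF (k+1))) = k := by
    have hsurj : Function.Surjective (sumF (k+1)) := by
      intro a
      refine ⟨EuclideanSpace.single 0 a, ?_⟩
      simp [sumF, EuclideanSpace.single_apply]
    have h := LinearMap.finrank_range_add_finrank_ker (sumF (k+1))
    rw [LinearMap.range_eq_top.2 hsurj] at h
    simp [finrank_euclideanSpace_fin] at h
    omega
  set Φ : EuclideanSpace ℝ (Fin k) → EuclideanSpace ℝ (Fin (k+1)) :=
    fun x => bvec k 0 + (subIso _ hdim x : EuclideanSpace ℝ (Fin (k+1))) with hΦdef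
  have hΦ : Isometry Φ := isometry_addSub _ hdim _
  have hrange : range Φ = {y : EuclideanSpace ℝ (Fin (k+1)) | ∑ i, y i = 1} := by
    rw [hΦdef, range_addSub]
    ext y
    simp only [mem_setOf_eq, LinearMap.mem_ker]
    have : sumF (k+1) (y - bvec k 0) = (∑ i, y i) - 1 := by
      have h1 : sumF (k+1) (bvec k 0) = 1 := by
        simp [sumF, bvec, EuclideanSpace.single_apply]
      rw [map_sub, h1]; rfl
    rw [this]
    constructor
    · intro h; linarith
    · intro h; linarith
  have hΔsub : Δ ⊆ range Φ := by
    intro x hx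
    rw [hrange]
    exact sum_eq_one_on_simplex k hx
  set sPre := Φ ⁻¹' Δ with hsPre
  have hΔeq : Φ '' sPre = Δ := by
    rw [hsPre, image_preimage_eq_inter_range, inter_eq_self_of_subset_left hΔsub]
  have hcomp : IsCompact sPre := by
    have hb : Bornology.IsBounded sPre := by
      have := hΦ.antilipschitz.isBounded_preimage (simplex_compact k).isBounded
      simpa using this
    have hc : IsClosed sPre := (simplex_compact k).isClosed.preimage hΦ.continuous
    exact Metric.isCompact_of_isClosed_isBounded hc hb
  -- integrability of coordinates
  have hint : ∀ i, IntegrableOn (fun x : EuclideanSpace ℝ (Fin (k+1)) => x i) Δ μH[(k:ℝ)] := by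
    intro i
    rw [← hΔeq]
    refine (integrableOn_image_isometry hΦ hd0 sPre (PiLp.continuous_apply 2 _ i)).mpr ?_
    exact ContinuousOn.integrableOn_compact hcomp
      (((PiLp.continuous_apply 2 _ i).comp hΦ.continuous).continuousOn)
  -- symmetry
  have hsym : ∀ i, (∫ x in Δ, x i ∂μH[(k:ℝ)]) = ∫ x in Δ, x 0 ∂μH[(k:ℝ)] := by
    intro i
    set σ : Fin (k+1) ≃ Fin (k+1) := Equiv.swap 0 i with hσ
    set f := LinearIsometryEquiv.piLpCongrLeft 2 ℝ ℝ σ with hf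
    have hfapp : ∀ (x : EuclideanSpace ℝ (Fin (k+1))) (j : Fin (k+1)), f x j = x (σ.symm j) := by
      intro x j
      rw [hf, LinearIsometryEquiv.piLpCongrLeft_apply]
      rfl
    have hfe : ∀ j, f (bvec k j) = bvec k (σ j) := by
      intro j
      ext l
      rw [hfapp]
      simp [bvec, EuclideanSpace.single_apply, Equiv.symm_apply_eq]
    have hfΔ : f '' Δ = Δ := by
      have h1 : f '' Δ = convexHull ℝ (f '' range (bvec k)) := by
        have := (f.toLinearEquiv.toLinearMap).image_convexHull (range (bvec k))
        simpa using this
      rw [h1, ← range_comp]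
      have h2 : f ∘ bvec k = bvec k ∘ σ := by
        funext j; exact hfe j
      rw [h2, range_comp, σ.surjective.range_eq, image_univ]
    calc (∫ x in Δ, x i ∂μH[(k:ℝ)]) = ∫ y in f '' Δ, y i ∂μH[(k:ℝ)] := by rw [hfΔ]
      _ = ∫ x in Δ, f x i ∂μH[(k:ℝ)] :=
          setIntegral_image_isometry f.isometry hd0 Δ (PiLp.continuous_apply 2 _ i)
      _ = ∫ x in Δ, x 0 ∂μH[(k:ℝ)] := by
          refine setIntegral_congr_fun hΔmeas (fun x _ => ?_)
          rw [hfapp]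
          refine congrArg (fun j => x j) ?_
          rw [hσ]
          simp [Equiv.symm_swap, Equiv.swap_apply_right]
  -- total sum
  have hsum : (∑ i, ∫ x in Δ, x i ∂μH[(k:ℝ)]) = (μH[(k:ℝ)] Δ).toReal := by
    rw [← integral_finset_sum Finset.univ (fun i _ => hint i)]
    have : (∫ x in Δ, ∑ i, x i ∂μH[(k:ℝ)]) = ∫ _x in Δ, (1:ℝ) ∂μH[(k:ℝ)] :=
      setIntegral_congr_fun hΔmeas (fun x hx => sum_eq_one_on_simplex k hx)
    rw [this, setIntegral_const]
    simp
    rfl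
  have h0 : (∫ x in Δ, x 0 ∂μH[(k:ℝ)]) = (μH[(k:ℝ)] Δ).toReal * (1/(k+1:ℝ)) := by
    have hconst : (∑ _i : Fin (k+1), ∫ x in Δ, x 0 ∂μH[(k:ℝ)]) =
        (k+1:ℝ) * ∫ x in Δ, x 0 ∂μH[(k:ℝ)] := by
      rw [Finset.sum_const]
      simp [nsmul_eq_mul]
    have h1 : (k+1:ℝ) * (∫ x in Δ, x 0 ∂μH[(k:ℝ)]) = (μH[(k:ℝ)] Δ).toReal := by
      rw [← hconst, ← hsum]
      exact (Finset.sum_congr rfl (fun i _ => hsym i)).symm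
    have hk1 : (k+1:ℝ) ≠ 0 := by positivity
    field_simp
    linarith
  -- conclude
  have hmain : (∫ x in Δ, (∑ i, c i * x i) ∂μH[(k:ℝ)]) = ∑ i, c i * ∫ x in Δ, x i ∂μH[(k:ℝ)] := by
    rw [integral_finset_sum Finset.univ (fun i _ => ((hint i).const_mul (c i)))]
    exact Finset.sum_congr rfl (fun i _ => integral_const_mul (c i) _)
  rw [hmain]
  have hval : ∀ i : Fin (k+1), (∫ x in Δ, x i ∂μH[(k:ℝ)]) =
      (μH[(k:ℝ)] Δ).toReal * (1/(k+1:ℝ)) := fun i => (hsym i).trans h0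
  rw [Finset.sum_congr rfl (fun i _ => by rw [hval i])]
  rw [← Finset.sum_mul]
  ring

end Key

theorem setIntegral_image_linearMap {k : ℕ}
    (g : (EuclideanSpace ℝ (Fin k)) →ₗ[ℝ] EuclideanSpace ℝ (Fin k))
    (hg : LinearMap.det g ≠ 0) {s : Set (EuclideanSpace ℝ (Fin k))} (hs : IsCompact s)
    {v : EuclideanSpace ℝ (Fin k) → ℝ} (hv : Continuous v) :
    (∫ y in g '' s, v y ∂μH[(k:ℝ)]) =
      |LinearMap.det g| * ∫ x in s, v (g x) ∂μH[(k:ℝ)] := by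
  haveI : (μH[(k:ℝ)] : Measure (EuclideanSpace ℝ (Fin k))).IsAddHaarMeasure := by
    have h : ((k:ℝ)) = ((finrank ℝ (EuclideanSpace ℝ (Fin k)) : ℕ) : ℝ) := by
      simp [finrank_euclideanSpace_fin]
    rw [h]; infer_instance
  have hgc : Continuous g := g.continuous_of_finiteDimensional
  have hginj : Function.Injective g := (LinearMap.equivOfDetNeZero g hg).injective
  have hgs : MeasurableSet (g '' s) := (hs.image hgc).isClosed.measurableSet
  have hmap : Measure.map g (μH[(k:ℝ)]) =
      ENNReal.ofReal |(LinearMap.det g)⁻¹| • (μH[(k:ℝ)]) :=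
    Measure.map_linearMap_addHaar_eq_smul_addHaar _ hg
  have hrestr : (ENNReal.ofReal |(LinearMap.det g)⁻¹| • (μH[(k:ℝ)])).restrict (g '' s) =
      Measure.map g ((μH[(k:ℝ)]).restrict s) := by
    rw [← hmap, Measure.restrict_map hgc.measurable hgs, preimage_image_eq s hginj]
  have h1 : (∫ y, v y ∂((ENNReal.ofReal |(LinearMap.det g)⁻¹| •
        (μH[(k:ℝ)])).restrict (g '' s))) = ∫ x in s, v (g x) ∂μH[(k:ℝ)] := by
    rw [hrestr, integral_map hgc.measurable.aemeasurable hv.aestronglyMeasurable]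
  rw [Measure.restrict_smul, integral_smul_measure] at h1
  have htr : (ENNReal.ofReal |(LinearMap.det g)⁻¹|).toReal = |LinearMap.det g|⁻¹ := by
    rw [ENNReal.toReal_ofReal (abs_nonneg _), abs_inv]
  rw [htr] at h1
  have hd : |LinearMap.det g| ≠ 0 := abs_ne_zero.mpr hg
  field_simp at h1
  rw [← h1, smul_eq_mul]
  field_simp

/-- Lemma 1 (general form): the integral of an affine map over a `k`-simplex
spanned by `k+1` affinely independent points of `ℝⁿ`, with respect to the
`k`-dimensional Hausdorff measure, equals the measure of the simplex times the
arithmetic mean of the vertex values. -/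
theorem integral_affineMap_simplex_eq_measure_mul_mean
    (n k : ℕ) (hn : 1 ≤ n) (hk : k ≤ n)
    (w : Fin (k + 1) → EuclideanSpace ℝ (Fin n))
    (hw : AffineIndependent ℝ w)
    (u : EuclideanSpace ℝ (Fin n) →ᵃ[ℝ] ℝ) :
    ∫ x in convexHull ℝ (Set.range w), u x ∂(μH[(k : ℝ)]) =
      (μH[(k : ℝ)] (convexHull ℝ (Set.range w))).toReal *
        ((1 / (k + 1 : ℝ)) * ∑ i, u (w i)) := by
  classical
  have hd0 : (0:ℝ) ≤ (k:ℝ) := Nat.cast_nonneg k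
  haveI := isAddHaar_hausdorff_euclidean k
  have ucont : Continuous u := u.continuous_of_finiteDimensional
  -- the linear map sending the standard basis vectors to the vertices
  set L : EuclideanSpace ℝ (Fin (k+1)) →ₗ[ℝ] EuclideanSpace ℝ (Fin n) :=
    { toFun := fun x => ∑ i, x i • w i
      map_add' := by intro x y; simp [add_smul, Finset.sum_add_distrib]
      map_smul' := by intro c x; simp [smul_smul, Finset.smul_sum] } with hLdef
  have hLcont : Continuous L := L.continuous_of_finiteDimensional
  have hLapp : ∀ x, L x = ∑ i, x i • w i := fun x => rfl
  have hLe : ∀ i, L (bvec k i) = w i := by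
    intro i
    rw [hLapp, Finset.sum_eq_single i]
    · simp [bvec, EuclideanSpace.single_apply]
    · intro j _ hji
      simp [bvec, EuclideanSpace.single_apply, hji]
    · simp
  -- the standard simplex and its parametrization (as in `key_simplex`)
  set Δ : Set (EuclideanSpace ℝ (Fin (k+1))) := convexHull ℝ (range (bvec k)) with hΔdef
  have hΔmeas : MeasurableSet Δ := (simplex_compact k).isClosed.measurableSet
  have hdim : finrank ℝ (LinearMap.ker (sumF (k+1))) = k := by
    have hsurj : Function.Surjective (sumF (k+1)) := by
      intro a
      refine ⟨EuclideanSpace.single 0 a, ?_⟩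
      simp [sumF, EuclideanSpace.single_apply]
    have h := LinearMap.finrank_range_add_finrank_ker (sumF (k+1))
    rw [LinearMap.range_eq_top.2 hsurj] at h
    simp [finrank_euclideanSpace_fin] at h
    omega
  set Φ : EuclideanSpace ℝ (Fin k) → EuclideanSpace ℝ (Fin (k+1)) :=
    fun x => bvec k 0 + (subIso _ hdim x : EuclideanSpace ℝ (Fin (k+1))) with hΦdef
  have hΦ : Isometry Φ := isometry_addSub _ hdim _
  have hrange : range Φ = {y : EuclideanSpace ℝ (Fin (k+1)) | ∑ i, y i = 1} := by
    rw [hΦdef, range_addSub]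
    ext y
    simp only [mem_setOf_eq, LinearMap.mem_ker]
    have : sumF (k+1) (y - bvec k 0) = (∑ i, y i) - 1 := by
      have h1 : sumF (k+1) (bvec k 0) = 1 := by
        simp [sumF, bvec, EuclideanSpace.single_apply]
      rw [map_sub, h1]; rfl
    rw [this]
    constructor
    · intro h; linarith
    · intro h; linarith
  have hΔsub : Δ ⊆ range Φ := by
    intro x hx
    rw [hrange]
    exact sum_eq_one_on_simplex k hx
  set sPre := Φ ⁻¹' Δ with hsPre
  have hΔeq : Φ '' sPre = Δ := by
    rw [hsPre, image_preimage_eq_inter_range, inter_eq_self_of_subset_left hΔsub]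
  have hcomp : IsCompact sPre := by
    have hb : Bornology.IsBounded sPre := by
      have := hΦ.antilipschitz.isBounded_preimage (simplex_compact k).isBounded
      simpa using this
    have hc : IsClosed sPre := (simplex_compact k).isClosed.preimage hΦ.continuous
    exact Metric.isCompact_of_isClosed_isBounded hc hb
  -- the simplex as the image of Δ
  have hΓL : convexHull ℝ (Set.range w) = ⇑L '' Δ := by
    rw [hΔdef, L.image_convexHull, ← Set.range_comp, show ⇑L ∘ bvec k = w from funext hLe]
  -- injectivity of L on the kernel of the sum functional
  have hkerinj : ∀ v : EuclideanSpace ℝ (Fin (k+1)),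
      v ∈ LinearMap.ker (sumF (k+1)) → L v = 0 → v = 0 := by
    intro v hv hLv
    have h := affineIndependent_iff.mp hw Finset.univ (fun i => v i) hv (by rw [← hLapp]; exact hLv)
    ext i
    exact h i (Finset.mem_univ i)
  set m : LinearMap.ker (sumF (k+1)) →ₗ[ℝ] EuclideanSpace ℝ (Fin n) :=
    L.domRestrict _ with hm
  have minj : Function.Injective m := by
    intro a b hab
    have h2 : L ((a:EuclideanSpace ℝ (Fin (k+1))) - b) = 0 := by
      rw [map_sub, sub_eq_zero]
      exact hab
    have h3 := hkerinj _ (Submodule.sub_mem _ a.2 b.2) h2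
    exact Subtype.ext (by rwa [sub_eq_zero] at h3)
  have hWdim : finrank ℝ (LinearMap.range m) = k := by
    rw [LinearMap.finrank_range_of_inj minj]
    exact hdim
  set θ := subIso (LinearMap.range m) hWdim with hθ
  set Ψ : EuclideanSpace ℝ (Fin k) → EuclideanSpace ℝ (Fin n) :=
    fun y => w 0 + (θ y : EuclideanSpace ℝ (Fin n)) with hΨdef
  have hΨ : Isometry Ψ := isometry_addSub _ hWdim _
  set glm : EuclideanSpace ℝ (Fin k) →ₗ[ℝ] EuclideanSpace ℝ (Fin k) :=
    (θ.symm.toLinearEquiv.toLinearMap) ∘ₗ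
      (m.rangeRestrict ∘ₗ (subIso _ hdim).toLinearEquiv.toLinearMap) with hglm
  have hglmapp : ∀ x, glm x = θ.symm (m.rangeRestrict (subIso _ hdim x)) := fun x => rfl
  have hcomm : ∀ x, L (Φ x) = Ψ (glm x) := by
    intro x
    rw [hglmapp, hΨdef]
    simp only [LinearIsometryEquiv.apply_symm_apply]
    rw [hΦdef]
    simp only [map_add, hLe 0]
    congr 1
  have ginj : Function.Injective glm := by
    intro a b hab
    rw [hglmapp, hglmapp] at hab
    have h1 := θ.symm.injective hab
    have h2 : m (subIso _ hdim a) = m (subIso _ hdim b) := by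
      have := congrArg (Subtype.val) h1
      simpa using this
    exact (subIso _ hdim).injective (minj h2)
  have hdet : LinearMap.det glm ≠ 0 := by
    intro h
    have h1 := LinearMap.bot_lt_ker_of_det_eq_zero h
    rw [LinearMap.ker_eq_bot.mpr ginj] at h1
    exact lt_irrefl _ h1
  -- transporting sets
  have hΓΨ : ⇑L '' Δ = Ψ '' (⇑glm '' sPre) := by
    rw [← hΔeq, ← image_comp, ← image_comp]
    exact image_congr fun x _ => hcomm x
  -- measure identity
  have hmeasΓ : μH[(k:ℝ)] (convexHull ℝ (Set.range w)) =
      ENNReal.ofReal |LinearMap.det glm| * μH[(k:ℝ)] Δ := by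
    rw [hΓL, hΓΨ, hΨ.hausdorffMeasure_image (Or.inl hd0),
      Measure.addHaar_image_linearMap, ← hΔeq, hΦ.hausdorffMeasure_image (Or.inl hd0)]
  -- integral identity
  have hintΓ : (∫ x in convexHull ℝ (Set.range w), u x ∂μH[(k:ℝ)]) =
      |LinearMap.det glm| * ∫ x in Δ, u (L x) ∂μH[(k:ℝ)] := by
    rw [hΓL, hΓΨ, setIntegral_image_isometry hΨ hd0 _ ucont,
      setIntegral_image_linearMap glm hdet hcomp (v := fun z => u (Ψ z)) (ucont.comp hΨ.continuous)]
    congr 1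
    rw [← hΔeq, setIntegral_image_isometry hΦ hd0 sPre (u := fun y => u (L y)) (ucont.comp hLcont)]
    have : (fun x => u (Ψ (glm x))) = fun x => u (L (Φ x)) :=
      funext fun x => by rw [hcomm]
    rw [this]
  -- the values of u on the simplex
  have hdec : ∀ y, u y = u.linear y + u 0 := by
    intro y
    conv_lhs => rw [AffineMap.decomp u]
    rfl
  have hptw : ∀ x ∈ Δ, u (L x) = ∑ i, (fun j => u (w j)) i * x i := by
    intro x hx
    have hsum1 : (∑ i, x i) = 1 := sum_eq_one_on_simplex k hx
    rw [hdec (L x), hLapp, map_sum]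
    simp only [_root_.map_smul, smul_eq_mul]
    have h2 : ∀ i, u (w i) = u.linear (w i) + u 0 := fun i => hdec (w i)
    calc (∑ i, x i * u.linear (w i)) + u 0
        = (∑ i, x i * u.linear (w i)) + (∑ i, x i) * u 0 := by rw [hsum1, one_mul]
      _ = ∑ i, (x i * u.linear (w i) + x i * u 0) := by
          rw [Finset.sum_add_distrib, Finset.sum_mul]
      _ = ∑ i, u (w i) * x i := by
          refine Finset.sum_congr rfl fun i _ => ?_
          rw [h2 i]
          ring
  -- put everything together
  rw [hintΓ, setIntegral_congr_fun hΔmeas hptw, key_simplex k (fun j => u (w j)),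
    hmeasΓ, ENNReal.toReal_mul, ENNReal.toReal_ofReal (abs_nonneg _)]
  ring
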